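/- The number of 2-distant noncrossing partitions of [n] equals the number of 12312-avoiding partitions of [n]. -/

import Mathlib

open Finset

/-- Set partitions of `[n] = {1, …, n}`. -/
abbrev SP (n : ℕ) := Finpartition (Finset.Icc 1 n)

/-- `(i, j)` is an edge of the diagram of the partition `P`: either a loop `(i, i)`
on a singleton block, or `i < j` are in a common block with no element of that
block strictly between them. -/
def IsEdge {n : ℕ} (P : SP n) (i j : ℕ) : Prop :=
  (i = j ∧ {i} ∈ P.parts) ∨
  (i < j ∧ ∃ B ∈ P.parts, i ∈ B ∧ j ∈ B ∧ ∀ m ∈ B, ¬(i < m ∧ m < j))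

/-- Two edges `e₁ = (i₁, j₁)` and `e₂ = (i₂, j₂)` form a `k`-distant crossing:
`i₁ < i₂ ≤ j₁ < j₂` and `j₁ - i₂ ≥ k`. -/
def CrossPair (k : ℕ) (e₁ e₂ : ℕ × ℕ) : Prop :=
  e₁.1 < e₂.1 ∧ e₂.1 ≤ e₁.2 ∧ e₁.2 < e₂.2 ∧ k ≤ e₁.2 - e₂.1

/-- Two edges `e₁ = (i₁, j₁)` and `e₂ = (i₂, j₂)` form a `k`-distant nesting:
`i₁ < i₂ ≤ j₂ < j₁` and `j₂ - i₂ ≥ k`. -/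
def NestPair (k : ℕ) (e₁ e₂ : ℕ × ℕ) : Prop :=
  e₁.1 < e₂.1 ∧ e₂.1 ≤ e₂.2 ∧ e₂.2 < e₁.2 ∧ k ≤ e₂.2 - e₂.1

/-- The number of `k`-distant crossings of the partition `P`. -/
noncomputable def dcr {n : ℕ} (k : ℕ) (P : SP n) : ℕ :=
  Set.ncard {p : (ℕ × ℕ) × ℕ × ℕ |
    IsEdge P p.1.1 p.1.2 ∧ IsEdge P p.2.1 p.2.2 ∧ CrossPair k p.1 p.2}

/-- The number of `k`-distant nestings of the partition `P`. -/
noncomputable def dne {n : ℕ} (k : ℕ) (P : SP n) : ℕ :=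
  Set.ncard {p : (ℕ × ℕ) × ℕ × ℕ |
    IsEdge P p.1.1 p.1.2 ∧ IsEdge P p.2.1 p.2.2 ∧ NestPair k p.1 p.2}

/-- `P` is a complete matching: every block has exactly two elements. -/
def IsMatching {n : ℕ} (P : SP n) : Prop := ∀ B ∈ P.parts, B.card = 2

/-- The number of `k`-distant noncrossing complete matchings of `[m]`. -/
noncomputable def NCM (k m : ℕ) : ℕ :=
  Set.ncard {P : SP m | IsMatching P ∧ dcr k P = 0}

/-- The number of `k`-distant noncrossing partitions of `[n]`. -/
noncomputable def NCP (k n : ℕ) : ℕ :=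
  Set.ncard {P : SP n | dcr k P = 0}

/-- Openers of `P`: minimal elements of blocks of size at least two. -/
def openers {n : ℕ} (P : SP n) : Set ℕ :=
  {v | ∃ B ∈ P.parts, v ∈ B ∧ 2 ≤ B.card ∧ ∀ m ∈ B, v ≤ m}

/-- Closers of `P`: maximal elements of blocks of size at least two. -/
def closers {n : ℕ} (P : SP n) : Set ℕ :=
  {v | ∃ B ∈ P.parts, v ∈ B ∧ 2 ≤ B.card ∧ ∀ m ∈ B, m ≤ v}

/-- Singletons of `P`. -/
def singletons {n : ℕ} (P : SP n) : Set ℕ := {v | {v} ∈ P.parts}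

/-- Transients of `P`: elements of a block that are neither its minimum nor its
maximum (equivalently, vertices incident to two edges of the diagram). -/
def transients {n : ℕ} (P : SP n) : Set ℕ :=
  {v | ∃ B ∈ P.parts, v ∈ B ∧ (∃ m ∈ B, m < v) ∧ (∃ m ∈ B, v < m)}

/-- `P` avoids the pattern 12312: there are no `a < b < c < d < e` with `a, d`
in a block `A`, `b, e` in a block `B`, `c` in a block `C`, where
`min A < min B < min C`. -/
def Avoids12312 {n : ℕ} (P : SP n) : Prop :=
  ¬ ∃ a b c d e : ℕ, a < b ∧ b < c ∧ c < d ∧ d < e ∧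
    ∃ A ∈ P.parts, ∃ B ∈ P.parts, ∃ C ∈ P.parts,
      a ∈ A ∧ d ∈ A ∧ b ∈ B ∧ e ∈ B ∧ c ∈ C ∧
      (∃ x ∈ A, ∀ y ∈ B, x < y) ∧ (∃ x ∈ B, ∀ y ∈ C, x < y)

section Dev
open scoped Classical

/-! ### Basic keys -/

/-- max of a finset of naturals (0 if empty) -/
def maxk (B : Finset ℕ) : ℕ := B.max.getD 0
/-- min of a finset of naturals (0 if empty) -/
def mink (B : Finset ℕ) : ℕ := B.min.getD 0

lemma maxk_eq {B : Finset ℕ} (hB : B.Nonempty) : maxk B = B.max' hB := by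
  unfold maxk; rw [← Finset.coe_max' hB]; rfl

lemma mink_eq {B : Finset ℕ} (hB : B.Nonempty) : mink B = B.min' hB := by
  unfold mink; rw [← Finset.coe_min' hB]; rfl

lemma le_maxk {B : Finset ℕ} {a : ℕ} (ha : a ∈ B) : a ≤ maxk B := by
  rw [maxk_eq ⟨a, ha⟩]; exact Finset.le_max' _ _ ha

lemma maxk_mem {B : Finset ℕ} (hB : B.Nonempty) : maxk B ∈ B := by
  rw [maxk_eq hB]; exact Finset.max'_mem _ _

lemma mink_le {B : Finset ℕ} {a : ℕ} (ha : a ∈ B) : mink B ≤ a := by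
  rw [mink_eq ⟨a, ha⟩]; exact Finset.min'_le _ _ ha

lemma mink_mem {B : Finset ℕ} (hB : B.Nonempty) : mink B ∈ B := by
  rw [mink_eq hB]; exact Finset.min'_mem _ _

section PartitionBasics

variable {n : ℕ}

lemma part_subset {P : SP n} {B : Finset ℕ} (hB : B ∈ P.parts) : B ⊆ Finset.Icc 1 n :=
  P.le hB

lemma part_nonempty {P : SP n} {B : Finset ℕ} (hB : B ∈ P.parts) : B.Nonempty :=
  P.nonempty_of_mem_parts hB

lemma mem_le_n {P : SP n} {B : Finset ℕ} (hB : B ∈ P.parts) {a : ℕ} (ha : a ∈ B) : a ≤ n := by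
  have := part_subset hB ha; simp [Finset.mem_Icc] at this; omega

lemma mem_ge_one {P : SP n} {B : Finset ℕ} (hB : B ∈ P.parts) {a : ℕ} (ha : a ∈ B) : 1 ≤ a := by
  have := part_subset hB ha; simp [Finset.mem_Icc] at this; omega

lemma maxk_le_n {P : SP n} {B : Finset ℕ} (hB : B ∈ P.parts) : maxk B ≤ n :=
  mem_le_n hB (maxk_mem (part_nonempty hB))

lemma maxk_inj {P : SP n} {B C : Finset ℕ} (hB : B ∈ P.parts) (hC : C ∈ P.parts)
    (h : maxk B = maxk C) : B = C :=
  P.eq_of_mem_parts hB hC (maxk_mem (part_nonempty hB)) (h ▸ maxk_mem (part_nonempty hC))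

lemma mink_inj {P : SP n} {B C : Finset ℕ} (hB : B ∈ P.parts) (hC : C ∈ P.parts)
    (h : mink B = mink C) : B = C :=
  P.eq_of_mem_parts hB hC (mink_mem (part_nonempty hB)) (h ▸ mink_mem (part_nonempty hC))

/-! ### Nonloop edges -/

/-- Nonloop edge of the diagram. -/
def NEdge (P : SP n) (i j : ℕ) : Prop :=
  i < j ∧ ∃ B ∈ P.parts, i ∈ B ∧ j ∈ B ∧ ∀ m ∈ B, ¬(i < m ∧ m < j)

lemma NEdge.isEdge {P : SP n} {i j : ℕ} (h : NEdge P i j) : IsEdge P i j := Or.inr h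

lemma NEdge.le_n {P : SP n} {i j : ℕ} (h : NEdge P i j) : 1 ≤ i ∧ i < j ∧ j ≤ n := by
  obtain ⟨hij, B, hB, hi, hj, -⟩ := h
  exact ⟨mem_ge_one hB hi, hij, mem_le_n hB hj⟩

/-- `P` has no 2-distant crossing. -/
def NoCross (P : SP n) : Prop :=
  ∀ i₁ j₁ i₂ j₂, NEdge P i₁ j₁ → NEdge P i₂ j₂ → ¬ CrossPair 2 (i₁, j₁) (i₂, j₂)

lemma crossPair_nonloop {P : SP n} {i₁ j₁ i₂ j₂ : ℕ} (h₁ : IsEdge P i₁ j₁)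
    (h₂ : IsEdge P i₂ j₂) (hc : CrossPair 2 (i₁, j₁) (i₂, j₂)) :
    NEdge P i₁ j₁ ∧ NEdge P i₂ j₂ := by
  obtain ⟨c1, c2, c3, c4⟩ := hc
  simp only at c1 c2 c3 c4
  constructor
  · rcases h₁ with ⟨he, -⟩ | h
    · omega
    · exact h
  · rcases h₂ with ⟨he, -⟩ | h
    · omega
    · exact h

lemma dcr_eq_zero_iff {P : SP n} : dcr 2 P = 0 ↔ NoCross P := by
  have hfin : {p : (ℕ × ℕ) × ℕ × ℕ |
      IsEdge P p.1.1 p.1.2 ∧ IsEdge P p.2.1 p.2.2 ∧ CrossPair 2 p.1 p.2}.Finite := by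
    apply Set.Finite.subset (Set.finite_Icc ((0,0),(0,0)) ((n+1,n+1),(n+1,n+1)))
    rintro p ⟨h₁, h₂, hc⟩
    obtain ⟨e₁, e₂⟩ := crossPair_nonloop h₁ h₂ hc
    obtain ⟨a1, a2, a3⟩ := e₁.le_n
    obtain ⟨b1, b2, b3⟩ := e₂.le_n
    simp only [Set.mem_Icc, Prod.le_def]
    omega
  rw [dcr, Set.ncard_eq_zero hfin]
  constructor
  · intro h i₁ j₁ i₂ j₂ h₁ h₂ hc
    have : ((i₁,j₁),(i₂,j₂)) ∈ (∅ : Set ((ℕ × ℕ) × ℕ × ℕ)) := by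
      rw [← h]; exact ⟨h₁.isEdge, h₂.isEdge, hc⟩
    simp at this
  · intro h
    ext ⟨⟨i₁, j₁⟩, ⟨i₂, j₂⟩⟩
    simp only [Set.mem_setOf_eq, Set.mem_empty_iff_false, iff_false, not_and]
    intro h₁ h₂ hc
    obtain ⟨e₁, e₂⟩ := crossPair_nonloop h₁ h₂ hc
    exact h _ _ _ _ e₁ e₂ hc

/-! ### The pattern, via minima -/

/-- `P` contains the pattern 12312 (in min-form). -/
def HasPat (P : SP n) : Prop :=
  ∃ A ∈ P.parts, ∃ B ∈ P.parts, ∃ C ∈ P.parts, ∃ a b c d e : ℕ,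
    a ∈ A ∧ d ∈ A ∧ b ∈ B ∧ e ∈ B ∧ c ∈ C ∧
    a < b ∧ b < c ∧ c < d ∧ d < e ∧ mink A < mink B ∧ mink B < mink C

lemma exists_lt_iff_mink {P : SP n} {A B : Finset ℕ} (hA : A ∈ P.parts) (hB : B ∈ P.parts) :
    (∃ x ∈ A, ∀ y ∈ B, x < y) ↔ mink A < mink B := by
  constructor
  · rintro ⟨x, hx, h⟩
    exact lt_of_le_of_lt (mink_le hx) (h _ (mink_mem (part_nonempty hB)))
  · intro h
    exact ⟨mink A, mink_mem (part_nonempty hA), fun y hy => lt_of_lt_of_le h (mink_le hy)⟩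

lemma avoids_iff {P : SP n} : Avoids12312 P ↔ ¬ HasPat P := by
  unfold Avoids12312 HasPat
  constructor
  · rintro h ⟨A, hA, B, hB, C, hC, a, b, c, d, e, ha, hd, hb, he, hc, o1, o2, o3, o4, m1, m2⟩
    exact h ⟨a, b, c, d, e, o1, o2, o3, o4, A, hA, B, hB, C, hC, ha, hd, hb, he, hc,
      (exists_lt_iff_mink hA hB).2 m1, (exists_lt_iff_mink hB hC).2 m2⟩
  · rintro h ⟨a, b, c, d, e, o1, o2, o3, o4, A, hA, B, hB, C, hC, ha, hd, hb, he, hc, m1, m2⟩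
    exact h ⟨A, hA, B, hB, C, hC, a, b, c, d, e, ha, hd, hb, he, hc, o1, o2, o3, o4,
      (exists_lt_iff_mink hA hB).1 m1, (exists_lt_iff_mink hB hC).1 m2⟩

end PartitionBasics
end Dev
section Surgery
open scoped Classical
variable {n : ℕ}

lemma succ_not_mem {P : SP n} {B : Finset ℕ} (hB : B ∈ P.parts) : n + 1 ∉ B :=
  fun h => by have := mem_le_n hB h; omega

lemma succ_mem_Icc : n + 1 ∈ Finset.Icc 1 (n + 1) := by simp

/-- Add `{n+1}` as a singleton block. -/
def addS (P : SP n) : SP (n + 1) :=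
  P.extend (b := {n + 1}) (by simp)
    (by simp [Finset.disjoint_singleton_right, Finset.mem_Icc])
    (by ext x; simp [Finset.mem_Icc]; omega)

lemma addS_parts (P : SP n) : (addS P).parts = insert {n + 1} P.parts := by
  simp [addS]

/-- Insert `n+1` into the block `B`. -/
def extB (P : SP n) (B : Finset ℕ) (hB : B ∈ P.parts) : SP (n + 1) where
  parts := insert (insert (n + 1) B) (P.parts.erase B)
  supIndep := by
    rw [Finset.supIndep_iff_pairwiseDisjoint]
    have hpd := P.disjoint
    intro x hx y hy hxy
    simp only [Finset.coe_insert, Set.mem_insert_iff, Finset.mem_coe, Finset.mem_erase] at hx hy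
    have key : ∀ d : Finset ℕ, d ≠ B → d ∈ P.parts → Disjoint (insert (n + 1) B) d := by
      intro d hd hdP
      rw [Finset.disjoint_left]
      intro a ha had
      rcases Finset.mem_insert.1 ha with rfl | haB
      · exact succ_not_mem hdP had
      · exact (Finset.disjoint_left.1 (hpd hB hdP (Ne.symm hd)) haB) had
    rcases hx with rfl | ⟨hxB, hxP⟩
    · rcases hy with rfl | ⟨hyB, hyP⟩
      · exact absurd rfl hxy
      · exact key y hyB hyP
    · rcases hy with rfl | ⟨hyB, hyP⟩
      · exact (key x hxB hxP).symm
      · exact hpd hxP hyP hxy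
  sup_parts := by
    ext x
    rw [Finset.mem_sup]
    constructor
    · rintro ⟨D, hD, hx⟩
      rcases Finset.mem_insert.1 hD with rfl | hD
      · rcases Finset.mem_insert.1 hx with rfl | hx
        · simp
        · have := mem_le_n hB hx; have := mem_ge_one hB hx
          simp only [Finset.mem_Icc]; omega
      · have hDP := Finset.mem_of_mem_erase hD
        have := mem_le_n hDP hx; have := mem_ge_one hDP hx
        simp only [Finset.mem_Icc]; omega
    · intro hx
      simp only [Finset.mem_Icc] at hx
      by_cases hxn : x = n + 1
      · exact ⟨insert (n + 1) B, Finset.mem_insert_self _ _, by simp [hxn]⟩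
      · have hx' : x ∈ Finset.Icc 1 n := by simp only [Finset.mem_Icc]; omega
        rw [← P.sup_parts, Finset.mem_sup] at hx'
        obtain ⟨D, hD, hxD⟩ := hx'
        by_cases hDB : D = B
        · exact ⟨insert (n + 1) B, Finset.mem_insert_self _ _,
            Finset.mem_insert_of_mem (hDB ▸ hxD)⟩
        · exact ⟨D, Finset.mem_insert_of_mem (Finset.mem_erase.2 ⟨hDB, hD⟩), hxD⟩
  bot_notMem := by
    intro h
    rcases Finset.mem_insert.1 h with h | h
    · exact absurd h.symm (Finset.insert_ne_empty _ _)
    · exact P.bot_notMem (Finset.mem_of_mem_erase h)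

lemma extB_parts (P : SP n) (B : Finset ℕ) (hB : B ∈ P.parts) :
    (extB P B hB).parts = insert (insert (n + 1) B) (P.parts.erase B) := rfl

lemma Icc_sdiff : Finset.Icc 1 (n + 1) \ {n + 1} = Finset.Icc 1 n := by
  ext x; simp only [Finset.mem_sdiff, Finset.mem_Icc, Finset.mem_singleton]; omega

/-- Remove `n+1` from a partition of `[n+1]`. -/
def res (P' : SP (n + 1)) : SP n := (P'.avoid {n + 1}).copy Icc_sdiff

lemma mem_res {P' : SP (n + 1)} {D : Finset ℕ} :
    D ∈ (res P').parts ↔ ∃ d ∈ P'.parts, d ≠ {n + 1} ∧ d.erase (n + 1) = D := by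
  show D ∈ (P'.avoid {n + 1}).parts ↔ _
  rw [Finpartition.mem_avoid]
  refine exists_congr fun d => and_congr_right fun hd => and_congr ?_ ?_
  · rw [Finset.le_iff_subset, Finset.subset_singleton_iff]
    have := part_nonempty hd
    constructor
    · intro h h'; exact h (Or.inr h')
    · rintro h (h' | h')
      · exact absurd h' (Finset.nonempty_iff_ne_empty.1 this)
      · exact h h'
  · rw [← Finset.erase_eq]

lemma insert_ne_singleton {P : SP n} {B : Finset ℕ} (hB : B ∈ P.parts) :
    insert (n + 1) B ≠ {n + 1} := by
  intro h
  obtain ⟨b, hb⟩ := part_nonempty hB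
  have h1 : b ∈ ({n + 1} : Finset ℕ) := h ▸ Finset.mem_insert_of_mem hb
  have h2 := mem_le_n hB hb
  rw [Finset.mem_singleton] at h1; omega

lemma erase_insert_succ {P : SP n} {B : Finset ℕ} (hB : B ∈ P.parts) :
    (insert (n + 1) B).erase (n + 1) = B :=
  Finset.erase_insert (succ_not_mem hB)

lemma res_addS (P : SP n) : res (addS P) = P := by
  ext1
  ext D
  rw [mem_res, addS_parts]
  constructor
  · rintro ⟨d, hd, hne, rfl⟩
    rcases Finset.mem_insert.1 hd with rfl | hd
    · exact absurd rfl hne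
    · rwa [Finset.erase_eq_of_notMem (succ_not_mem hd)]
  · intro hD
    exact ⟨D, Finset.mem_insert_of_mem hD, fun h => succ_not_mem hD (h.symm ▸ Finset.mem_singleton_self _),
      Finset.erase_eq_of_notMem (succ_not_mem hD)⟩

lemma res_extB (P : SP n) (B : Finset ℕ) (hB : B ∈ P.parts) : res (extB P B hB) = P := by
  ext1
  ext D
  rw [mem_res, extB_parts]
  constructor
  · rintro ⟨d, hd, hne, rfl⟩
    rcases Finset.mem_insert.1 hd with rfl | hd
    · rwa [erase_insert_succ hB]
    · have hd' := Finset.mem_of_mem_erase hd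
      rwa [Finset.erase_eq_of_notMem (succ_not_mem hd')]
  · intro hD
    by_cases hDB : D = B
    · subst hDB
      exact ⟨insert (n + 1) D, Finset.mem_insert_self _ _, insert_ne_singleton hB,
        erase_insert_succ hB⟩
    · exact ⟨D, Finset.mem_insert_of_mem (Finset.mem_erase.2 ⟨hDB, hD⟩),
        fun h => succ_not_mem hD (h.symm ▸ Finset.mem_singleton_self _), Finset.erase_eq_of_notMem (succ_not_mem hD)⟩

lemma part_addS (P : SP n) : (addS P).part (n + 1) = {n + 1} :=
  (addS P).part_eq_of_mem (by rw [addS_parts]; exact Finset.mem_insert_self _ _)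
    (Finset.mem_singleton_self _)

lemma part_extB (P : SP n) (B : Finset ℕ) (hB : B ∈ P.parts) :
    (extB P B hB).part (n + 1) = insert (n + 1) B :=
  (extB P B hB).part_eq_of_mem (Finset.mem_insert_self _ _) (Finset.mem_insert_self _ _)

lemma mem_part_ne_succ {P' : SP (n + 1)} {D : Finset ℕ} (hD : D ∈ P'.parts)
    (hne : D ≠ P'.part (n + 1)) : n + 1 ∉ D := by
  intro h
  exact hne (P'.part_eq_of_mem hD h).symm

lemma addS_res {P' : SP (n + 1)} (h : P'.part (n + 1) = {n + 1}) : addS (res P') = P' := by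
  ext1
  rw [addS_parts]
  ext D
  constructor
  · intro hD
    rcases Finset.mem_insert.1 hD with rfl | hD
    · exact h ▸ P'.part_mem.2 succ_mem_Icc
    · obtain ⟨d, hd, hne, rfl⟩ := mem_res.1 hD
      have : n + 1 ∉ d := mem_part_ne_succ hd (h ▸ hne)
      rwa [Finset.erase_eq_of_notMem this]
  · intro hD
    by_cases hDs : D = {n + 1}
    · exact hDs ▸ Finset.mem_insert_self _ _
    · refine Finset.mem_insert_of_mem (mem_res.2 ⟨D, hD, hDs, ?_⟩)
      exact Finset.erase_eq_of_notMem (mem_part_ne_succ hD (fun hc => hDs (hc ▸ h)))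

lemma erase_part_mem_res {P' : SP (n + 1)} (h : P'.part (n + 1) ≠ {n + 1}) :
    (P'.part (n + 1)).erase (n + 1) ∈ (res P').parts :=
  mem_res.2 ⟨P'.part (n + 1), P'.part_mem.2 succ_mem_Icc, h, rfl⟩

lemma extB_res {P' : SP (n + 1)} (h : P'.part (n + 1) ≠ {n + 1}) :
    extB (res P') ((P'.part (n + 1)).erase (n + 1)) (erase_part_mem_res h) = P' := by
  have hTmem : n + 1 ∈ P'.part (n + 1) := P'.mem_part succ_mem_Icc
  have hT : insert (n + 1) ((P'.part (n + 1)).erase (n + 1)) = P'.part (n + 1) :=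
    Finset.insert_erase hTmem
  ext1
  rw [extB_parts, hT]
  ext D
  constructor
  · intro hD
    rcases Finset.mem_insert.1 hD with rfl | hD
    · exact P'.part_mem.2 succ_mem_Icc
    · obtain ⟨hne, hD⟩ := Finset.mem_erase.1 hD
      obtain ⟨d, hd, hdne, rfl⟩ := mem_res.1 hD
      have : n + 1 ∉ d := by
        intro hc
        exact hne (by rw [P'.part_eq_of_mem hd hc])
      rwa [Finset.erase_eq_of_notMem this]
  · intro hD
    by_cases hDT : D = P'.part (n + 1)
    · exact hDT ▸ Finset.mem_insert_self _ _
    · have hnm : n + 1 ∉ D := mem_part_ne_succ hD hDT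
      refine Finset.mem_insert_of_mem (Finset.mem_erase.2 ⟨?_, mem_res.2
        ⟨D, hD, fun hc => hnm (hc.symm ▸ Finset.mem_singleton_self _), Finset.erase_eq_of_notMem hnm⟩⟩)
      intro hc
      obtain ⟨x, hx⟩ := part_nonempty hD
      have hx2 : x ∈ P'.part (n + 1) := Finset.mem_of_mem_erase (hc ▸ hx)
      exact hDT (P'.eq_of_mem_parts hD (P'.part_mem.2 succ_mem_Icc) hx hx2)

lemma maxk_insert_succ {P : SP n} {B : Finset ℕ} (hB : B ∈ P.parts) :
    maxk (insert (n + 1) B) = n + 1 := by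
  refine le_antisymm ?_ (le_maxk (Finset.mem_insert_self _ _))
  have h := maxk_mem (B := insert (n + 1) B) ⟨n + 1, Finset.mem_insert_self _ _⟩
  rcases Finset.mem_insert.1 h with h' | h'
  · omega
  · have := mem_le_n hB h'; omega

lemma mink_insert_succ {P : SP n} {B : Finset ℕ} (hB : B ∈ P.parts) :
    mink (insert (n + 1) B) = mink B := by
  have hBne := part_nonempty hB
  have h1 : mink (insert (n + 1) B) ≤ mink B :=
    mink_le (Finset.mem_insert_of_mem (mink_mem hBne))
  have h2 := mink_mem (B := insert (n + 1) B) ⟨n + 1, Finset.mem_insert_self _ _⟩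
  rcases Finset.mem_insert.1 h2 with h' | h'
  · have := mem_le_n hB (mink_mem hBne); omega
  · have := mink_le h'; omega

end Surgery
section Transfer
open scoped Classical
variable {n : ℕ}

lemma nedge_addS {P : SP n} {i j : ℕ} : NEdge (addS P) i j ↔ NEdge P i j := by
  constructor
  · rintro ⟨hij, D, hD, hi, hj, hcons⟩
    rw [addS_parts] at hD
    rcases Finset.mem_insert.1 hD with rfl | hD
    · rw [Finset.mem_singleton] at hi hj; omega
    · exact ⟨hij, D, hD, hi, hj, hcons⟩
  · rintro ⟨hij, D, hD, hi, hj, hcons⟩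
    exact ⟨hij, D, by rw [addS_parts]; exact Finset.mem_insert_of_mem hD, hi, hj, hcons⟩

lemma nedge_extB {P : SP n} {B : Finset ℕ} (hB : B ∈ P.parts) {i j : ℕ} :
    NEdge (extB P B hB) i j ↔ NEdge P i j ∨ (i = maxk B ∧ j = n + 1) := by
  have hBn := part_nonempty hB
  have hmax : maxk B ≤ n := maxk_le_n hB
  constructor
  · rintro ⟨hij, D, hD, hi, hj, hcons⟩
    rw [extB_parts] at hD
    rcases Finset.mem_insert.1 hD with rfl | hD
    · by_cases hjn : j = n + 1
      · subst hjn
        have hiB : i ∈ B := by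
          rcases Finset.mem_insert.1 hi with rfl | h
          · omega
          · exact h
        right
        refine ⟨?_, rfl⟩
        by_contra hne
        have hlt : i < maxk B := lt_of_le_of_ne (le_maxk hiB) hne
        exact hcons (maxk B) (Finset.mem_insert_of_mem (maxk_mem hBn)) ⟨hlt, by omega⟩
      · have hjB : j ∈ B := by
          rcases Finset.mem_insert.1 hj with rfl | h
          · omega
          · exact h
        have hjn' : j ≤ n := mem_le_n hB hjB
        have hiB : i ∈ B := by
          rcases Finset.mem_insert.1 hi with rfl | h
          · omega
          · exact h
        exact Or.inl ⟨hij, B, hB, hiB, hjB, fun m hm => hcons m (Finset.mem_insert_of_mem hm)⟩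
    · exact Or.inl ⟨hij, D, Finset.mem_of_mem_erase hD, hi, hj, hcons⟩
  · rintro (⟨hij, D, hD, hi, hj, hcons⟩ | ⟨rfl, rfl⟩)
    · by_cases hDB : D = B
      · subst hDB
        refine ⟨hij, insert (n + 1) D, by rw [extB_parts]; exact Finset.mem_insert_self _ _,
          Finset.mem_insert_of_mem hi, Finset.mem_insert_of_mem hj, ?_⟩
        intro m hm
        rcases Finset.mem_insert.1 hm with rfl | hm
        · have := mem_le_n hB hj; omega
        · exact hcons m hm
      · refine ⟨hij, D, ?_, hi, hj, hcons⟩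
        rw [extB_parts]
        exact Finset.mem_insert_of_mem (Finset.mem_erase.2 ⟨hDB, hD⟩)
    · refine ⟨by omega, insert (n + 1) B, by rw [extB_parts]; exact Finset.mem_insert_self _ _,
        Finset.mem_insert_of_mem (maxk_mem hBn), Finset.mem_insert_self _ _, ?_⟩
      intro m hm
      rcases Finset.mem_insert.1 hm with rfl | hm
      · omega
      · have := le_maxk hm; omega

/-- `B` can receive the next element without creating a 2-distant crossing. -/
def ExtN (P : SP n) (B : Finset ℕ) : Prop :=
  ∀ i j, NEdge P i j → i < maxk B → maxk B ≤ j → j < maxk B + 2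

lemma noCross_addS {P : SP n} : NoCross (addS P) ↔ NoCross P := by
  unfold NoCross
  constructor
  · intro h i₁ j₁ i₂ j₂ h₁ h₂
    exact h _ _ _ _ (nedge_addS.2 h₁) (nedge_addS.2 h₂)
  · intro h i₁ j₁ i₂ j₂ h₁ h₂
    exact h _ _ _ _ (nedge_addS.1 h₁) (nedge_addS.1 h₂)

lemma noCross_extB {P : SP n} {B : Finset ℕ} (hB : B ∈ P.parts) :
    NoCross (extB P B hB) ↔ NoCross P ∧ ExtN P B := by
  have hmax : maxk B ≤ n := maxk_le_n hB
  constructor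
  · intro h
    constructor
    · intro i₁ j₁ i₂ j₂ h₁ h₂
      exact h _ _ _ _ ((nedge_extB hB).2 (Or.inl h₁)) ((nedge_extB hB).2 (Or.inl h₂))
    · intro i j hij hi hj
      by_contra hc
      obtain ⟨h1, -, h3⟩ := hij.le_n
      exact h i j (maxk B) (n + 1) ((nedge_extB hB).2 (Or.inl hij))
        ((nedge_extB hB).2 (Or.inr ⟨rfl, rfl⟩)) ⟨hi, hj, by omega, by simp; omega⟩
  · rintro ⟨hnc, hext⟩ i₁ j₁ i₂ j₂ h₁ h₂ hc
    obtain ⟨c1, c2, c3, c4⟩ := hc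
    simp only at c1 c2 c3 c4
    rcases (nedge_extB hB).1 h₁ with e₁ | ⟨rfl, rfl⟩
    · rcases (nedge_extB hB).1 h₂ with e₂ | ⟨rfl, rfl⟩
      · exact hnc _ _ _ _ e₁ e₂ ⟨c1, c2, c3, c4⟩
      · obtain ⟨-, -, hb3⟩ := e₁.le_n
        have := hext _ _ e₁ c1 c2
        omega
    · rcases (nedge_extB hB).1 h₂ with e₂ | ⟨rfl, rfl⟩
      · obtain ⟨-, -, hb3⟩ := e₂.le_n
        omega
      · omega

/-- `B` can receive the next element without creating a 12312 pattern. -/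
def ExtA (P : SP n) (B : Finset ℕ) : Prop :=
  ¬ ∃ A ∈ P.parts, ∃ C ∈ P.parts, ∃ a b c d : ℕ,
    a ∈ A ∧ d ∈ A ∧ b ∈ B ∧ c ∈ C ∧ a < b ∧ b < c ∧ c < d ∧
    mink A < mink B ∧ mink B < mink C

lemma hasPat_addS {P : SP n} : HasPat (addS P) ↔ HasPat P := by
  constructor
  · rintro ⟨A, hA, Bb, hBb, C, hC, a, b, c, d, e, ha, hd, hb, he, hc, o1, o2, o3, o4, m1, m2⟩
    rw [addS_parts] at hA hBb hC
    rcases Finset.mem_insert.1 hA with rfl | hA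
    · rw [Finset.mem_singleton] at ha hd; omega
    rcases Finset.mem_insert.1 hBb with rfl | hBb
    · rw [Finset.mem_singleton] at hb he; omega
    rcases Finset.mem_insert.1 hC with rfl | hC
    · rw [Finset.mem_singleton] at hc
      have := mem_le_n hA hd; omega
    exact ⟨A, hA, Bb, hBb, C, hC, a, b, c, d, e, ha, hd, hb, he, hc, o1, o2, o3, o4, m1, m2⟩
  · rintro ⟨A, hA, Bb, hBb, C, hC, a, b, c, d, e, ha, hd, hb, he, hc, o1, o2, o3, o4, m1, m2⟩
    exact ⟨A, by rw [addS_parts]; exact Finset.mem_insert_of_mem hA,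
      Bb, by rw [addS_parts]; exact Finset.mem_insert_of_mem hBb,
      C, by rw [addS_parts]; exact Finset.mem_insert_of_mem hC,
      a, b, c, d, e, ha, hd, hb, he, hc, o1, o2, o3, o4, m1, m2⟩

lemma hasPat_extB {P : SP n} {B : Finset ℕ} (hB : B ∈ P.parts) :
    HasPat (extB P B hB) ↔ HasPat P ∨ ¬ ExtA P B := by
  have hkey : ∀ D ∈ (extB P B hB).parts, ∃ D₀ ∈ P.parts, mink D₀ = mink D ∧
      (∀ x ∈ D, x ≤ n → x ∈ D₀) ∧ (D ≠ insert (n + 1) B → D₀ = D) := by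
    intro D hD
    rw [extB_parts] at hD
    rcases Finset.mem_insert.1 hD with rfl | hD
    · refine ⟨B, hB, (mink_insert_succ hB).symm, ?_, fun h => absurd rfl h⟩
      intro x hx hxn
      rcases Finset.mem_insert.1 hx with rfl | h
      · omega
      · exact h
    · exact ⟨D, Finset.mem_of_mem_erase hD, rfl, fun x hx _ => hx, fun _ => rfl⟩
  constructor
  · rintro ⟨A, hA, Bb, hBb, C, hC, a, b, c, d, e, ha, hd, hb, he, hc, o1, o2, o3, o4, m1, m2⟩
    obtain ⟨A₀, hA₀, mA, sA, -⟩ := hkey A hA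
    obtain ⟨C₀, hC₀, mC, sC, -⟩ := hkey C hC
    have he' : e ≤ n + 1 := mem_le_n hBb he
    have hd' : d ≤ n := by omega
    have hc' : c ≤ n := by omega
    have hb' : b ≤ n := by omega
    have ha' : a ≤ n := by omega
    by_cases hen : e = n + 1
    · -- new pattern: Bb must be the extended block
      have hBbB : Bb = insert (n + 1) B := by
        by_contra hne
        obtain ⟨B₀, hB₀, -, -, hid⟩ := hkey Bb hBb
        rw [hid hne] at hB₀
        have : n + 1 ∉ Bb := by
          rw [extB_parts] at hBb
          rcases Finset.mem_insert.1 hBb with rfl | h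
          · exact absurd rfl hne
          · exact succ_not_mem (Finset.mem_of_mem_erase h)
        exact this (hen ▸ he)
      subst hBbB
      right
      intro hExt
      refine hExt ⟨A₀, hA₀, C₀, hC₀, a, b, c, d, sA a ha ha', ?_, ?_, sC c hc hc',
        o1, o2, o3, ?_, ?_⟩
      · exact sA d hd hd'
      · rcases Finset.mem_insert.1 hb with rfl | h
        · omega
        · exact h
      · rw [mA]; rw [mink_insert_succ hB] at m1; exact m1
      · rw [mC]; rw [mink_insert_succ hB] at m2; exact m2
    · -- old pattern
      obtain ⟨B₀, hB₀, mB, sB, -⟩ := hkey Bb hBb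
      left
      exact ⟨A₀, hA₀, B₀, hB₀, C₀, hC₀, a, b, c, d, e, sA a ha ha', sA d hd hd',
        sB b hb hb', sB e he (by omega), sC c hc hc', o1, o2, o3, o4,
        by rw [mA, mB]; exact m1, by rw [mB, mC]; exact m2⟩
  · intro h
    have hmap : ∀ D ∈ P.parts, ∃ D' ∈ (extB P B hB).parts, mink D' = mink D ∧ D ⊆ D' := by
      intro D hD
      by_cases hDB : D = B
      · subst hDB
        exact ⟨insert (n + 1) D, by rw [extB_parts]; exact Finset.mem_insert_self _ _,
          mink_insert_succ hB, Finset.subset_insert _ _⟩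
      · refine ⟨D, ?_, rfl, subset_rfl⟩
        rw [extB_parts]
        exact Finset.mem_insert_of_mem (Finset.mem_erase.2 ⟨hDB, hD⟩)
    rcases h with hP | hExt
    · obtain ⟨A, hA, Bb, hBb, C, hC, a, b, c, d, e, ha, hd, hb, he, hc, o1, o2, o3, o4, m1, m2⟩ := hP
      obtain ⟨A', hA', mA, sA⟩ := hmap A hA
      obtain ⟨B', hB', mB, sB⟩ := hmap Bb hBb
      obtain ⟨C', hC', mC, sC⟩ := hmap C hC
      exact ⟨A', hA', B', hB', C', hC', a, b, c, d, e, sA ha, sA hd, sB hb, sB he, sC hc,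
        o1, o2, o3, o4, by rw [mA, mB]; exact m1, by rw [mB, mC]; exact m2⟩
    · rw [ExtA] at hExt
      push_neg at hExt
      obtain ⟨A, hA, C, hC, a, b, c, d, ha, hd, hb, hc, o1, o2, o3, m1, m2⟩ := hExt
      have hAB : A ≠ B := fun h => by rw [h] at m1; omega
      have hCB : C ≠ B := fun h => by rw [h] at m2; omega
      refine ⟨A, ?_, insert (n + 1) B, ?_, C, ?_,
        a, b, c, d, n + 1, ha, hd, Finset.mem_insert_of_mem hb, Finset.mem_insert_self _ _,
        hc, o1, o2, o3, by have := mem_le_n hA hd; omega, ?_, ?_⟩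
      · rw [extB_parts]
        exact Finset.mem_insert_of_mem (Finset.mem_erase.2 ⟨hAB, hA⟩)
      · rw [extB_parts]
        exact Finset.mem_insert_self _ _
      · rw [extB_parts]
        exact Finset.mem_insert_of_mem (Finset.mem_erase.2 ⟨hCB, hC⟩)
      · rw [mink_insert_succ hB]; exact m1
      · rw [mink_insert_succ hB]; exact m2

end Transfer
section Counting
open scoped Classical
variable {n : ℕ}

/-- Generic counting: survivors of the generating-tree step. -/
lemma generic_count (S : Finset (Finset ℕ)) (key : Finset ℕ → ℕ)
    (hinj : ∀ D ∈ S, ∀ E ∈ S, key D = key E → D = E) (B T : Finset ℕ)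
    (hB : B ∈ S) (hT : T ∈ S) (hTmax : ∀ D ∈ S, key D ≤ key T) :
    ((S.filter (fun D => D ≠ B ∧ (key D < key B ∨ D = T))).card
      = (S.filter (fun D => key D ≤ key B)).card - 1 + (if B = T then 0 else 1))
    ∧ 1 ≤ (S.filter (fun D => key D ≤ key B)).card
    ∧ (B = T ↔ (S.filter (fun D => key D ≤ key B)).card = S.card) := by
  have h1 : S.filter (fun D => key D ≤ key B) = insert B (S.filter (fun D => key D < key B)) := by
    ext D
    simp only [Finset.mem_filter, Finset.mem_insert]
    constructor
    · rintro ⟨hDS, hle⟩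
      rcases lt_or_eq_of_le hle with h | h
      · exact Or.inr ⟨hDS, h⟩
      · exact Or.inl (hinj D hDS B hB h)
    · rintro (rfl | ⟨hDS, hlt⟩)
      · exact ⟨hB, le_refl _⟩
      · exact ⟨hDS, le_of_lt hlt⟩
  have h2 : B ∉ S.filter (fun D => key D < key B) := by
    simp only [Finset.mem_filter]; rintro ⟨-, h⟩; omega
  have hcard : (S.filter (fun D => key D ≤ key B)).card
      = (S.filter (fun D => key D < key B)).card + 1 := by
    rw [h1, Finset.card_insert_of_notMem h2]
  have hiff : B = T ↔ (S.filter (fun D => key D ≤ key B)).card = S.card := by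
    constructor
    · rintro rfl
      rw [Finset.filter_true_of_mem (fun D hD => hTmax D hD)]
    · intro h
      have hsub : S.filter (fun D => key D ≤ key B) ⊆ S := Finset.filter_subset _ _
      have heq : S.filter (fun D => key D ≤ key B) = S :=
        Finset.eq_of_subset_of_card_le hsub (le_of_eq h.symm)
      have : T ∈ S.filter (fun D => key D ≤ key B) := heq.symm ▸ hT
      have hTB : key T ≤ key B := (Finset.mem_filter.1 this).2
      exact hinj B hB T hT (le_antisymm (hTmax B hB) hTB)
  refine ⟨?_, by omega, hiff⟩
  by_cases hBT : B = T
  · subst hBT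
    have : S.filter (fun D => D ≠ B ∧ (key D < key B ∨ D = B))
        = S.filter (fun D => key D < key B) := by
      apply Finset.filter_congr
      intro D hD
      constructor
      · rintro ⟨hne, h | h⟩
        · exact h
        · exact absurd h hne
      · intro h
        exact ⟨fun hc => by rw [hc] at h; omega, Or.inl h⟩
    rw [this, if_pos rfl]
    omega
  · have : S.filter (fun D => D ≠ B ∧ (key D < key B ∨ D = T))
        = insert T (S.filter (fun D => key D < key B)) := by
      ext D
      simp only [Finset.mem_filter, Finset.mem_insert]
      constructor
      · rintro ⟨hDS, hne, h | h⟩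
        · exact Or.inr ⟨hDS, h⟩
        · exact Or.inl h
      · rintro (rfl | ⟨hDS, hlt⟩)
        · exact ⟨hT, fun hc => hBT hc.symm, Or.inr rfl⟩
        · exact ⟨hDS, fun hc => by rw [hc] at hlt; omega, Or.inl hlt⟩
    rw [this, Finset.card_insert_of_notMem ?_]
    · simp only [if_neg hBT]; omega
    · simp only [Finset.mem_filter]
      rintro ⟨-, h⟩
      have := hTmax B hB
      omega

/-! ### The extendable sets -/

noncomputable def extSetN (P : SP n) : Finset (Finset ℕ) :=
  P.parts.filter (fun B => ExtN P B)

noncomputable def extSetA (P : SP n) : Finset (Finset ℕ) :=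
  P.parts.filter (fun B => ExtA P B)

lemma singleton_succ_not_mem_parts (P : SP n) : ({n + 1} : Finset ℕ) ∉ P.parts := by
  intro h
  have := mem_le_n h (Finset.mem_singleton_self (n + 1))
  omega

lemma maxk_singleton (a : ℕ) : maxk ({a} : Finset ℕ) = a := by
  rw [maxk, Finset.max_singleton]; rfl

lemma mink_singleton (a : ℕ) : mink ({a} : Finset ℕ) = a := by
  rw [mink, Finset.min_singleton]; rfl

lemma extSetN_addS (P : SP n) : extSetN (addS P) = insert {n + 1} (extSetN P) := by
  ext D
  simp only [extSetN, Finset.mem_filter, Finset.mem_insert, addS_parts]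
  constructor
  · rintro ⟨rfl | hD, hE⟩
    · exact Or.inl rfl
    · refine Or.inr ⟨hD, ?_⟩
      intro i j he hi hj
      exact hE i j (nedge_addS.2 he) hi hj
  · rintro (rfl | ⟨hD, hE⟩)
    · refine ⟨Or.inl rfl, ?_⟩
      intro i j he hi hj
      obtain ⟨-, -, h3⟩ := (nedge_addS.1 he).le_n
      rw [maxk_singleton] at hi hj
      omega
    · refine ⟨Or.inr hD, ?_⟩
      intro i j he hi hj
      exact hE i j (nedge_addS.1 he) hi hj

lemma card_extSetN_addS (P : SP n) : (extSetN (addS P)).card = (extSetN P).card + 1 := by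
  rw [extSetN_addS, Finset.card_insert_of_notMem]
  intro h
  exact singleton_succ_not_mem_parts P (Finset.mem_filter.1 h).1

lemma extN_extB_self {P : SP n} {B : Finset ℕ} (hB : B ∈ P.parts) :
    ExtN (extB P B hB) (insert (n + 1) B) := by
  intro i j he hi hj
  obtain ⟨-, -, h3⟩ := he.le_n
  rw [maxk_insert_succ hB] at hi hj ⊢
  omega

lemma extN_extB_old {P : SP n} {B D : Finset ℕ} (hB : B ∈ P.parts) (hD : D ∈ P.parts)
    (hDB : D ≠ B) :
    ExtN (extB P B hB) D ↔ ExtN P D ∧ (maxk D < maxk B ∨ maxk D = n) := by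
  have hne : maxk D ≠ maxk B := fun h => hDB (maxk_inj hD hB h)
  have hDn : maxk D ≤ n := maxk_le_n hD
  constructor
  · intro h
    refine ⟨fun i j he hi hj => h i j ((nedge_extB hB).2 (Or.inl he)) hi hj, ?_⟩
    by_cases hlt : maxk B < maxk D
    · right
      have := h (maxk B) (n + 1) ((nedge_extB hB).2 (Or.inr ⟨rfl, rfl⟩)) hlt (by omega)
      omega
    · left; omega
  · rintro ⟨hE, hor⟩ i j he hi hj
    rcases (nedge_extB hB).1 he with he' | ⟨rfl, rfl⟩
    · exact hE i j he' hi hj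
    · omega

lemma part_n_mem_parts (P : SP n) (hn : 1 ≤ n) : P.part n ∈ P.parts :=
  P.part_mem.2 (by simp [Finset.mem_Icc]; omega)

lemma maxk_part_n (P : SP n) (hn : 1 ≤ n) : maxk (P.part n) = n := by
  refine le_antisymm (maxk_le_n (part_n_mem_parts P hn)) ?_
  exact le_maxk (P.mem_part (by simp [Finset.mem_Icc]; omega))

lemma part_n_mem_extSetN (P : SP n) (hn : 1 ≤ n) : P.part n ∈ extSetN P := by
  rw [extSetN, Finset.mem_filter]
  refine ⟨part_n_mem_parts P hn, ?_⟩
  intro i j he hi hj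
  obtain ⟨-, -, h3⟩ := he.le_n
  rw [maxk_part_n P hn] at hi hj ⊢
  omega

lemma extSetN_extB (P : SP n) {B : Finset ℕ} (hBp : B ∈ P.parts) (hBe : ExtN P B) :
    extSetN (extB P B hBp) = insert (insert (n + 1) B)
      ((extSetN P).filter (fun D => D ≠ B ∧ (maxk D < maxk B ∨ D = P.part n))) := by
  have hn : 1 ≤ n := by
    obtain ⟨b, hb⟩ := part_nonempty hBp
    have := mem_ge_one hBp hb; have := mem_le_n hBp hb; omega
  ext D
  simp only [extSetN, Finset.mem_filter, Finset.mem_insert, extB_parts, Finset.mem_erase]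
  constructor
  · rintro ⟨rfl | ⟨hDB, hDp⟩, hE⟩
    · exact Or.inl rfl
    · refine Or.inr ⟨⟨hDp, (extN_extB_old hBp hDp hDB).1 hE |>.1⟩, hDB, ?_⟩
      rcases ((extN_extB_old hBp hDp hDB).1 hE).2 with h | h
      · exact Or.inl h
      · exact Or.inr (maxk_inj hDp (part_n_mem_parts P hn) (by rw [maxk_part_n P hn]; exact h))
  · rintro (rfl | ⟨⟨hDp, hDE⟩, hDB, hor⟩)
    · exact ⟨Or.inl rfl, extN_extB_self hBp⟩
    · refine ⟨Or.inr ⟨hDB, hDp⟩, ?_⟩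
      refine (extN_extB_old hBp hDp hDB).2 ⟨hDE, ?_⟩
      rcases hor with h | rfl
      · exact Or.inl h
      · exact Or.inr (maxk_part_n P hn)

/-- The rank of an extendable block (class N). -/
noncomputable def rankN (P : SP n) (B : Finset ℕ) : ℕ :=
  ((extSetN P).filter (fun D => maxk D ≤ maxk B)).card

lemma labelN_extB (P : SP n) {B : Finset ℕ} (hBe : B ∈ extSetN P) (hBp : B ∈ P.parts) :
    (extSetN (extB P B hBp)).card
      = rankN P B + (if rankN P B = (extSetN P).card then 0 else 1) := by
  have hn : 1 ≤ n := by
    obtain ⟨b, hb⟩ := part_nonempty hBp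
    have := mem_ge_one hBp hb; have := mem_le_n hBp hb; omega
  have hinj : ∀ D ∈ extSetN P, ∀ E ∈ extSetN P, maxk D = maxk E → D = E := by
    intro D hD E hE h
    exact maxk_inj (Finset.mem_filter.1 hD).1 (Finset.mem_filter.1 hE).1 h
  have hT : P.part n ∈ extSetN P := part_n_mem_extSetN P hn
  have hTmax : ∀ D ∈ extSetN P, maxk D ≤ maxk (P.part n) := by
    intro D hD
    rw [maxk_part_n P hn]
    exact maxk_le_n (Finset.mem_filter.1 hD).1
  obtain ⟨hc, hr1, hiff⟩ := generic_count (extSetN P) maxk hinj B (P.part n) hBe hT hTmax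
  have hBE : ExtN P B := (Finset.mem_filter.1 hBe).2
  have hnot : insert (n + 1) B ∉
      (extSetN P).filter (fun D => D ≠ B ∧ (maxk D < maxk B ∨ D = P.part n)) := by
    intro h
    have := (Finset.mem_filter.1 (Finset.mem_filter.1 h).1).1
    exact succ_not_mem this (Finset.mem_insert_self _ _)
  rw [extSetN_extB P hBp hBE, Finset.card_insert_of_notMem hnot]
  rw [rankN]
  rw [hc]
  by_cases hBT : B = P.part n
  · rw [if_pos hBT, if_pos (hiff.1 hBT)]
    omega
  · rw [if_neg hBT, if_neg (fun h => hBT (hiff.2 h))]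
    omega

end Counting
section ASide
open scoped Classical
variable {n : ℕ}

/-- `B` has the largest block-minimum. -/
def IsTopA (P : SP n) (B : Finset ℕ) : Prop := ∀ D ∈ P.parts, mink D ≤ mink B

lemma exists_top (P : SP n) (hn : P.parts.Nonempty) : ∃ T ∈ P.parts, IsTopA P T := by
  obtain ⟨T, hT, h⟩ := Finset.exists_max_image P.parts mink hn
  exact ⟨T, hT, h⟩

lemma topA_unique {P : SP n} {T T' : Finset ℕ} (hT : T ∈ P.parts) (hT' : T' ∈ P.parts)
    (h1 : IsTopA P T) (h2 : IsTopA P T') : T = T' :=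
  mink_inj hT hT' (le_antisymm (h2 T hT) (h1 T' hT'))

lemma top_extA {P : SP n} {T : Finset ℕ} (hT : T ∈ P.parts) (htop : IsTopA P T) : ExtA P T := by
  rintro ⟨A, hA, C, hC, a, b, c, d, ha, hd, hb, hc, o1, o2, o3, m1, m2⟩
  have := htop C hC
  omega

lemma extA_addS_new (P : SP n) : ExtA (addS P) ({n + 1} : Finset ℕ) := by
  rintro ⟨A, hA, C, hC, a, b, c, d, ha, hd, hb, hc, o1, o2, o3, m1, m2⟩
  rw [Finset.mem_singleton] at hb
  have hd' : d ≤ n + 1 := mem_le_n hA hd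
  omega

lemma extA_addS_old (P : SP n) (D : Finset ℕ) : ExtA (addS P) D ↔ ExtA P D := by
  unfold ExtA
  rw [not_iff_not]
  constructor
  · rintro ⟨A, hA, C, hC, a, b, c, d, ha, hd, hb, hc, o1, o2, o3, m1, m2⟩
    rw [addS_parts] at hA hC
    rcases Finset.mem_insert.1 hA with rfl | hA
    · rw [Finset.mem_singleton] at ha hd; omega
    rcases Finset.mem_insert.1 hC with rfl | hC
    · rw [Finset.mem_singleton] at hc
      have := mem_le_n hA hd; omega
    exact ⟨A, hA, C, hC, a, b, c, d, ha, hd, hb, hc, o1, o2, o3, m1, m2⟩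
  · rintro ⟨A, hA, C, hC, a, b, c, d, ha, hd, hb, hc, o1, o2, o3, m1, m2⟩
    refine ⟨A, ?_, C, ?_, a, b, c, d, ha, hd, hb, hc, o1, o2, o3, m1, m2⟩
    · rw [addS_parts]; exact Finset.mem_insert_of_mem hA
    · rw [addS_parts]; exact Finset.mem_insert_of_mem hC

lemma extSetA_addS (P : SP n) : extSetA (addS P) = insert {n + 1} (extSetA P) := by
  ext D
  simp only [extSetA, Finset.mem_filter, Finset.mem_insert, addS_parts]
  constructor
  · rintro ⟨rfl | hD, hE⟩
    · exact Or.inl rfl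
    · exact Or.inr ⟨hD, (extA_addS_old P D).1 hE⟩
  · rintro (rfl | ⟨hD, hE⟩)
    · exact ⟨Or.inl rfl, extA_addS_new P⟩
    · exact ⟨Or.inr hD, (extA_addS_old P D).2 hE⟩

lemma card_extSetA_addS (P : SP n) : (extSetA (addS P)).card = (extSetA P).card + 1 := by
  rw [extSetA_addS, Finset.card_insert_of_notMem]
  intro h
  exact singleton_succ_not_mem_parts P (Finset.mem_filter.1 h).1

lemma extA_extB_self {P : SP n} {B : Finset ℕ} (hB : B ∈ P.parts) :
    ExtA (extB P B hB) (insert (n + 1) B) ↔ ExtA P B := by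
  unfold ExtA
  rw [not_iff_not]
  constructor
  · rintro ⟨A, hA, C, hC, a, b, c, d, ha, hd, hb, hc, o1, o2, o3, m1, m2⟩
    rw [mink_insert_succ hB] at m1 m2
    rw [extB_parts] at hA hC
    have hA' : A ∈ P.parts ∧ A ≠ B := by
      rcases Finset.mem_insert.1 hA with rfl | hA
      · rw [mink_insert_succ hB] at m1; omega
      · exact ⟨Finset.mem_of_mem_erase hA, (Finset.mem_erase.1 hA).1⟩
    have hC' : C ∈ P.parts ∧ C ≠ B := by
      rcases Finset.mem_insert.1 hC with rfl | hC
      · rw [mink_insert_succ hB] at m2; omega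
      · exact ⟨Finset.mem_of_mem_erase hC, (Finset.mem_erase.1 hC).1⟩
    have hd' : d ≤ n := mem_le_n hA'.1 hd
    have hbB : b ∈ B := by
      rcases Finset.mem_insert.1 hb with rfl | h
      · omega
      · exact h
    exact ⟨A, hA'.1, C, hC'.1, a, b, c, d, ha, hd, hbB, hc, o1, o2, o3, m1, m2⟩
  · rintro ⟨A, hA, C, hC, a, b, c, d, ha, hd, hb, hc, o1, o2, o3, m1, m2⟩
    have hAB : A ≠ B := fun h => by rw [h] at m1; omega
    have hCB : C ≠ B := fun h => by rw [h] at m2; omega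
    refine ⟨A, ?_, C, ?_, a, b, c, d, ha, hd, Finset.mem_insert_of_mem hb, hc, o1, o2, o3, ?_, ?_⟩
    · rw [extB_parts]; exact Finset.mem_insert_of_mem (Finset.mem_erase.2 ⟨hAB, hA⟩)
    · rw [extB_parts]; exact Finset.mem_insert_of_mem (Finset.mem_erase.2 ⟨hCB, hC⟩)
    · rw [mink_insert_succ hB]; exact m1
    · rw [mink_insert_succ hB]; exact m2

lemma extA_extB_old {P : SP n} {B D : Finset ℕ} (hB : B ∈ P.parts) (hD : D ∈ P.parts)
    (hDB : D ≠ B) :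
    ExtA (extB P B hB) D ↔ ExtA P D ∧ (mink D < mink B ∨ IsTopA P D) := by
  have hmap : ∀ E ∈ P.parts, ∃ E' ∈ (extB P B hB).parts, mink E' = mink E ∧ E ⊆ E' := by
    intro E hE
    by_cases hEB : E = B
    · subst hEB
      exact ⟨insert (n + 1) E, by rw [extB_parts]; exact Finset.mem_insert_self _ _,
        mink_insert_succ hB, Finset.subset_insert _ _⟩
    · refine ⟨E, ?_, rfl, subset_rfl⟩
      rw [extB_parts]
      exact Finset.mem_insert_of_mem (Finset.mem_erase.2 ⟨hEB, hE⟩)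
  have hkey : ∀ E ∈ (extB P B hB).parts, ∃ E₀ ∈ P.parts, mink E₀ = mink E ∧
      (∀ x ∈ E, x ≤ n → x ∈ E₀) := by
    intro E hE
    rw [extB_parts] at hE
    rcases Finset.mem_insert.1 hE with rfl | hE
    · refine ⟨B, hB, (mink_insert_succ hB).symm, ?_⟩
      intro x hx hxn
      rcases Finset.mem_insert.1 hx with rfl | h
      · omega
      · exact h
    · exact ⟨E, Finset.mem_of_mem_erase hE, rfl, fun x hx _ => hx⟩
  constructor
  · intro h
    constructor
    · -- ExtA P D
      rintro ⟨A, hA, C, hC, a, b, c, d, ha, hd, hb, hc, o1, o2, o3, m1, m2⟩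
      obtain ⟨A', hA', mA, sA⟩ := hmap A hA
      obtain ⟨C', hC', mC, sC⟩ := hmap C hC
      exact h ⟨A', hA', C', hC', a, b, c, d, sA ha, sA hd, hb, sC hc, o1, o2, o3,
        by omega, by omega⟩
    · -- the disjunct
      by_contra hcon
      rw [not_or] at hcon
      obtain ⟨h1, h2'⟩ := hcon
      rw [IsTopA] at h2'
      push_neg at h2'
      obtain ⟨E, hE, h2⟩ := h2'
      rw [not_lt] at h1
      have hBD : mink B < mink D := by
        have : mink B ≠ mink D := fun hc => hDB (mink_inj hD hB hc.symm)
        omega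
      have hEB : E ≠ B := by
        intro hc; rw [hc] at h2; omega
      have hEe : E ∈ (extB P B hB).parts := by
        rw [extB_parts]; exact Finset.mem_insert_of_mem (Finset.mem_erase.2 ⟨hEB, hE⟩)
      have hBne := part_nonempty hB
      have hDne := part_nonempty hD
      have hEne := part_nonempty hE
      refine h ⟨insert (n + 1) B, by rw [extB_parts]; exact Finset.mem_insert_self _ _,
        E, hEe, mink B, mink D, mink E, n + 1,
        Finset.mem_insert_of_mem (mink_mem hBne), Finset.mem_insert_self _ _,
        mink_mem hDne, mink_mem hEne, hBD, by omega, ?_, ?_, by omega⟩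
      · have := mem_le_n hE (mink_mem hEne); omega
      · rw [mink_insert_succ hB]; exact hBD
  · rintro ⟨hE, hor⟩ ⟨A, hA, C, hC, a, b, c, d, ha, hd, hb, hc, o1, o2, o3, m1, m2⟩
    by_cases hdn : d ≤ n
    · obtain ⟨A₀, hA₀, mA, sA⟩ := hkey A hA
      obtain ⟨C₀, hC₀, mC, sC⟩ := hkey C hC
      exact hE ⟨A₀, hA₀, C₀, hC₀, a, b, c, d, sA a ha (by omega), sA d hd hdn,
        hb, sC c hc (by omega), o1, o2, o3, by omega, by omega⟩
    · -- d = n + 1, so A is the extended block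
      have hd1 : d = n + 1 := by
        have := mem_le_n hA hd; omega
      have hAB : A = insert (n + 1) B := by
        rw [extB_parts] at hA
        rcases Finset.mem_insert.1 hA with h | h
        · exact h
        · exfalso
          exact succ_not_mem (Finset.mem_of_mem_erase h) (hd1 ▸ hd)
      rw [hAB, mink_insert_succ hB] at m1
      rcases hor with h | htop
      · omega
      · -- C is an original block with larger min, contradicting IsTop
        obtain ⟨C₀, hC₀, mC, -⟩ := hkey C hC
        have := htop C₀ hC₀
        omega

lemma extSetA_extB (P : SP n) {B : Finset ℕ} (hBp : B ∈ P.parts) (hBe : ExtA P B) :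
    extSetA (extB P B hBp) = insert (insert (n + 1) B)
      ((extSetA P).filter (fun D => D ≠ B ∧ (mink D < mink B ∨ IsTopA P D))) := by
  ext D
  simp only [extSetA, Finset.mem_filter, Finset.mem_insert, extB_parts, Finset.mem_erase]
  constructor
  · rintro ⟨rfl | ⟨hDB, hDp⟩, hE⟩
    · exact Or.inl rfl
    · exact Or.inr ⟨⟨hDp, ((extA_extB_old hBp hDp hDB).1 hE).1⟩, hDB,
        ((extA_extB_old hBp hDp hDB).1 hE).2⟩
  · rintro (rfl | ⟨⟨hDp, hDE⟩, hDB, hor⟩)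
    · exact ⟨Or.inl rfl, (extA_extB_self hBp).2 hBe⟩
    · exact ⟨Or.inr ⟨hDB, hDp⟩, (extA_extB_old hBp hDp hDB).2 ⟨hDE, hor⟩⟩

/-- The rank of an extendable block (class A). -/
noncomputable def rankA (P : SP n) (B : Finset ℕ) : ℕ :=
  ((extSetA P).filter (fun D => mink D ≤ mink B)).card

lemma labelA_extB (P : SP n) {B : Finset ℕ} (hBe : B ∈ extSetA P) (hBp : B ∈ P.parts) :
    (extSetA (extB P B hBp)).card
      = rankA P B + (if rankA P B = (extSetA P).card then 0 else 1) := by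
  obtain ⟨T, hTp, hTop⟩ := exists_top P ⟨B, hBp⟩
  have hTe : T ∈ extSetA P := Finset.mem_filter.2 ⟨hTp, top_extA hTp hTop⟩
  have hinj : ∀ D ∈ extSetA P, ∀ E ∈ extSetA P, mink D = mink E → D = E := by
    intro D hD E hE h
    exact mink_inj (Finset.mem_filter.1 hD).1 (Finset.mem_filter.1 hE).1 h
  have hTmax : ∀ D ∈ extSetA P, mink D ≤ mink T := by
    intro D hD
    exact hTop D (Finset.mem_filter.1 hD).1
  obtain ⟨hc, hr1, hiff⟩ := generic_count (extSetA P) mink hinj B T hBe hTe hTmax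
  have hfc : (extSetA P).filter (fun D => D ≠ B ∧ (mink D < mink B ∨ IsTopA P D))
      = (extSetA P).filter (fun D => D ≠ B ∧ (mink D < mink B ∨ D = T)) := by
    apply Finset.filter_congr
    intro D hD
    have hDp := (Finset.mem_filter.1 hD).1
    constructor
    · rintro ⟨h1, h2 | h2⟩
      · exact ⟨h1, Or.inl h2⟩
      · exact ⟨h1, Or.inr (topA_unique hDp hTp h2 hTop)⟩
    · rintro ⟨h1, h2 | rfl⟩
      · exact ⟨h1, Or.inl h2⟩
      · exact ⟨h1, Or.inr hTop⟩
  have hBE : ExtA P B := (Finset.mem_filter.1 hBe).2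
  have hnot : insert (n + 1) B ∉
      (extSetA P).filter (fun D => D ≠ B ∧ (mink D < mink B ∨ IsTopA P D)) := by
    intro h
    have := (Finset.mem_filter.1 (Finset.mem_filter.1 h).1).1
    exact succ_not_mem this (Finset.mem_insert_self _ _)
  rw [extSetA_extB P hBp hBE, Finset.card_insert_of_notMem hnot, hfc]
  rw [rankA]
  rw [hc]
  by_cases hBT : B = T
  · rw [if_pos hBT, if_pos (hiff.1 hBT)]
    omega
  · rw [if_neg hBT, if_neg (fun h => hBT (hiff.2 h))]
    omega

end ASide
section Assembly
open scoped Classical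
variable {n : ℕ}

/-- Ranking equiv for a finite family with injective key. -/
lemma rank_equiv (S : Finset (Finset ℕ)) (key : Finset ℕ → ℕ)
    (hinj : ∀ D ∈ S, ∀ E ∈ S, key D = key E → D = E) :
    ∃ e : {B // B ∈ S} ≃ Fin S.card,
      ∀ B : {B // B ∈ S}, ((e B) : ℕ) + 1 = (S.filter (fun D => key D ≤ key B.1)).card := by
  have hrank1 : ∀ B : {B // B ∈ S}, 1 ≤ (S.filter (fun D => key D ≤ key B.1)).card := by
    intro B
    exact Finset.card_pos.2 ⟨B.1, Finset.mem_filter.2 ⟨B.2, le_refl _⟩⟩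
  have hrankle : ∀ B : {B // B ∈ S}, (S.filter (fun D => key D ≤ key B.1)).card ≤ S.card :=
    fun B => Finset.card_le_card (Finset.filter_subset _ _)
  have hmono : ∀ B B' : {B // B ∈ S}, key B.1 < key B'.1 →
      (S.filter (fun D => key D ≤ key B.1)).card < (S.filter (fun D => key D ≤ key B'.1)).card := by
    intro B B' hlt
    apply Finset.card_lt_card
    rw [Finset.ssubset_def]
    constructor
    · intro D hD
      obtain ⟨h1, h2⟩ := Finset.mem_filter.1 hD
      exact Finset.mem_filter.2 ⟨h1, by omega⟩
    · intro hsub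
      have : B'.1 ∈ S.filter (fun D => key D ≤ key B.1) :=
        hsub (Finset.mem_filter.2 ⟨B'.2, le_refl _⟩)
      have := (Finset.mem_filter.1 this).2
      omega
  set f : {B // B ∈ S} → Fin S.card := fun B =>
    ⟨(S.filter (fun D => key D ≤ key B.1)).card - 1, by
      have := hrank1 B; have := hrankle B; omega⟩ with hf
  have hinjf : Function.Injective f := by
    intro B B' h
    have hv : (S.filter (fun D => key D ≤ key B.1)).card
        = (S.filter (fun D => key D ≤ key B'.1)).card := by
      have h1 := hrank1 B; have h2 := hrank1 B'
      have := congrArg Fin.val h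
      simp only [hf] at this
      omega
    have hkey : key B.1 = key B'.1 := by
      rcases lt_trichotomy (key B.1) (key B'.1) with hlt | heq | hgt
      · have := hmono B B' hlt; omega
      · exact heq
      · have := hmono B' B hgt; omega
    exact Subtype.ext (hinj B.1 B.2 B'.1 B'.2 hkey)
  have hbij : Function.Bijective f := by
    rw [Fintype.bijective_iff_injective_and_card]
    refine ⟨hinjf, ?_⟩
    rw [Fintype.card_coe, Fintype.card_fin]
  refine ⟨Equiv.ofBijective f hbij, ?_⟩
  intro B
  have := hrank1 B
  simp only [Equiv.ofBijective_apply, hf]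
  omega

/-! ### The two classes -/

def C1 (n : ℕ) := {P : SP n // NoCross P}
def C2 (n : ℕ) := {P : SP n // ¬ HasPat P}

/-- Child assembly, class N. -/
noncomputable def fN : (Σ P : C1 n, Option {B // B ∈ extSetN P.1}) → C1 (n + 1)
  | ⟨⟨P, hP⟩, none⟩ => ⟨addS P, noCross_addS.2 hP⟩
  | ⟨⟨P, hP⟩, some ⟨B, hB⟩⟩ => ⟨extB P B (Finset.mem_filter.1 hB).1,
      (noCross_extB (Finset.mem_filter.1 hB).1).2 ⟨hP, (Finset.mem_filter.1 hB).2⟩⟩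

/-- Child assembly, class A. -/
noncomputable def fA : (Σ P : C2 n, Option {B // B ∈ extSetA P.1}) → C2 (n + 1)
  | ⟨⟨P, hP⟩, none⟩ => ⟨addS P, fun h => hP (hasPat_addS.1 h)⟩
  | ⟨⟨P, hP⟩, some ⟨B, hB⟩⟩ => ⟨extB P B (Finset.mem_filter.1 hB).1, by
      intro h
      rcases (hasPat_extB (Finset.mem_filter.1 hB).1).1 h with h' | h'
      · exact hP h'
      · exact h' (Finset.mem_filter.1 hB).2⟩

lemma res_fN (x : Σ P : C1 n, Option {B // B ∈ extSetN P.1}) : res (fN x).1 = x.1.1 := by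
  obtain ⟨⟨P, hP⟩, (_ | ⟨B, hB⟩)⟩ := x
  · exact res_addS P
  · exact res_extB P B (Finset.mem_filter.1 hB).1

lemma res_fA (x : Σ P : C2 n, Option {B // B ∈ extSetA P.1}) : res (fA x).1 = x.1.1 := by
  obtain ⟨⟨P, hP⟩, (_ | ⟨B, hB⟩)⟩ := x
  · exact res_addS P
  · exact res_extB P B (Finset.mem_filter.1 hB).1

lemma fN_inj : Function.Injective (fN (n := n)) := by
  rintro ⟨⟨P, hP⟩, i⟩ ⟨⟨Q, hQ⟩, j⟩ h
  have hv : (fN ⟨⟨P, hP⟩, i⟩).1 = (fN ⟨⟨Q, hQ⟩, j⟩).1 := congrArg Subtype.val h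
  have hPQ : P = Q := by
    have r1 : res (fN ⟨⟨P, hP⟩, i⟩).1 = P := res_fN ⟨⟨P, hP⟩, i⟩
    have r2 : res (fN ⟨⟨Q, hQ⟩, j⟩).1 = Q := res_fN ⟨⟨Q, hQ⟩, j⟩
    rw [hv] at r1
    rw [r2] at r1
    exact r1.symm
  subst hPQ
  have hij : i = j := by
    match i, j with
    | none, none => rfl
    | none, some ⟨B, hB⟩ =>
      exfalso
      have h1 := part_addS P
      have h2 := part_extB P B (Finset.mem_filter.1 hB).1
      rw [show (addS P) = extB P B (Finset.mem_filter.1 hB).1 from hv] at h1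
      rw [h2] at h1
      exact insert_ne_singleton (Finset.mem_filter.1 hB).1 h1
    | some ⟨B, hB⟩, none =>
      exfalso
      have h1 := part_addS P
      have h2 := part_extB P B (Finset.mem_filter.1 hB).1
      rw [show (addS P) = extB P B (Finset.mem_filter.1 hB).1 from hv.symm] at h1
      rw [h2] at h1
      exact insert_ne_singleton (Finset.mem_filter.1 hB).1 h1
    | some ⟨B, hB⟩, some ⟨B', hB'⟩ =>
      have h2 := part_extB P B (Finset.mem_filter.1 hB).1
      have h2' := part_extB P B' (Finset.mem_filter.1 hB').1
      rw [show extB P B (Finset.mem_filter.1 hB).1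
        = extB P B' (Finset.mem_filter.1 hB').1 from hv] at h2
      have : insert (n + 1) B' = insert (n + 1) B := by rw [← h2, ← h2']
      have hBB : B' = B := by
        rw [← erase_insert_succ (Finset.mem_filter.1 hB').1,
          ← erase_insert_succ (Finset.mem_filter.1 hB).1, this]
      subst hBB
      rfl
  subst hij
  rfl

lemma fA_inj : Function.Injective (fA (n := n)) := by
  rintro ⟨⟨P, hP⟩, i⟩ ⟨⟨Q, hQ⟩, j⟩ h
  have hv : (fA ⟨⟨P, hP⟩, i⟩).1 = (fA ⟨⟨Q, hQ⟩, j⟩).1 := congrArg Subtype.val h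
  have hPQ : P = Q := by
    have r1 : res (fA ⟨⟨P, hP⟩, i⟩).1 = P := res_fA ⟨⟨P, hP⟩, i⟩
    have r2 : res (fA ⟨⟨Q, hQ⟩, j⟩).1 = Q := res_fA ⟨⟨Q, hQ⟩, j⟩
    rw [hv] at r1
    rw [r2] at r1
    exact r1.symm
  subst hPQ
  have hij : i = j := by
    match i, j with
    | none, none => rfl
    | none, some ⟨B, hB⟩ =>
      exfalso
      have h1 := part_addS P
      have h2 := part_extB P B (Finset.mem_filter.1 hB).1
      rw [show (addS P) = extB P B (Finset.mem_filter.1 hB).1 from hv] at h1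
      rw [h2] at h1
      exact insert_ne_singleton (Finset.mem_filter.1 hB).1 h1
    | some ⟨B, hB⟩, none =>
      exfalso
      have h1 := part_addS P
      have h2 := part_extB P B (Finset.mem_filter.1 hB).1
      rw [show (addS P) = extB P B (Finset.mem_filter.1 hB).1 from hv.symm] at h1
      rw [h2] at h1
      exact insert_ne_singleton (Finset.mem_filter.1 hB).1 h1
    | some ⟨B, hB⟩, some ⟨B', hB'⟩ =>
      have h2 := part_extB P B (Finset.mem_filter.1 hB).1
      have h2' := part_extB P B' (Finset.mem_filter.1 hB').1
      rw [show extB P B (Finset.mem_filter.1 hB).1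
        = extB P B' (Finset.mem_filter.1 hB').1 from hv] at h2
      have : insert (n + 1) B' = insert (n + 1) B := by rw [← h2, ← h2']
      have hBB : B' = B := by
        rw [← erase_insert_succ (Finset.mem_filter.1 hB').1,
          ← erase_insert_succ (Finset.mem_filter.1 hB).1, this]
      subst hBB
      rfl
  subst hij
  rfl

lemma fN_surj : Function.Surjective (fN (n := n)) := by
  rintro ⟨P', hP'⟩
  by_cases h : P'.part (n + 1) = {n + 1}
  · have hrec := addS_res h
    have hres : NoCross (res P') := by
      have := hP'; rw [← hrec] at this; exact noCross_addS.1 this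
    exact ⟨⟨⟨res P', hres⟩, none⟩, Subtype.ext hrec⟩
  · have hmem := erase_part_mem_res h
    have hrec := extB_res h
    have hprops : NoCross (res P') ∧ ExtN (res P') ((P'.part (n + 1)).erase (n + 1)) := by
      have := hP'; rw [← hrec] at this; exact (noCross_extB hmem).1 this
    refine ⟨⟨⟨res P', hprops.1⟩, some ⟨(P'.part (n + 1)).erase (n + 1),
      Finset.mem_filter.2 ⟨hmem, hprops.2⟩⟩⟩, Subtype.ext ?_⟩
    exact hrec

lemma fA_surj : Function.Surjective (fA (n := n)) := by
  rintro ⟨P', hP'⟩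
  by_cases h : P'.part (n + 1) = {n + 1}
  · have hrec := addS_res h
    have hres : ¬ HasPat (res P') := by
      intro hc
      apply hP'
      rw [← hrec]
      exact hasPat_addS.2 hc
    exact ⟨⟨⟨res P', hres⟩, none⟩, Subtype.ext hrec⟩
  · have hmem := erase_part_mem_res h
    have hrec := extB_res h
    have hnp : ¬ HasPat (extB (res P') _ hmem) := by rw [hrec]; exact hP'
    have hres : ¬ HasPat (res P') := fun hc => hnp ((hasPat_extB hmem).2 (Or.inl hc))
    have hext : ExtA (res P') ((P'.part (n + 1)).erase (n + 1)) := by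
      by_contra hc
      exact hnp ((hasPat_extB hmem).2 (Or.inr hc))
    refine ⟨⟨⟨res P', hres⟩, some ⟨(P'.part (n + 1)).erase (n + 1),
      Finset.mem_filter.2 ⟨hmem, hext⟩⟩⟩, Subtype.ext ?_⟩
    exact hrec

end Assembly
section Main
open scoped Classical

lemma sp_zero_parts (P : SP 0) : P.parts = ∅ := by
  rw [Finpartition.parts_eq_empty_iff, Finset.bot_eq_empty]
  exact Finset.Icc_eq_empty (by omega)

lemma noCross_zero (P : SP 0) : NoCross P := by
  intro i₁ j₁ i₂ j₂ h₁ h₂ hc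
  obtain ⟨-, B, hB, -⟩ := h₁
  rw [sp_zero_parts] at hB
  exact absurd hB (Finset.notMem_empty _)

lemma noPat_zero (P : SP 0) : ¬ HasPat P := by
  rintro ⟨A, hA, -⟩
  rw [sp_zero_parts] at hA
  exact absurd hA (Finset.notMem_empty _)

lemma extSetN_zero (P : SP 0) : extSetN P = ∅ := by
  rw [extSetN, sp_zero_parts, Finset.filter_empty]

lemma extSetA_zero (P : SP 0) : extSetA P = ∅ := by
  rw [extSetA, sp_zero_parts, Finset.filter_empty]

lemma fN_none_val {n : ℕ} (P : C1 n) : (fN ⟨P, none⟩).1 = addS P.1 := rfl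
lemma fA_none_val {n : ℕ} (Q : C2 n) : (fA ⟨Q, none⟩).1 = addS Q.1 := rfl

lemma main_equiv : ∀ n : ℕ, ∃ e : C1 n ≃ C2 n,
    ∀ P : C1 n, (extSetN P.1).card = (extSetA ((e P).1 : SP n)).card := by
  intro n
  induction n with
  | zero =>
    refine ⟨⟨fun P => ⟨P.1, noPat_zero P.1⟩, fun P => ⟨P.1, noCross_zero P.1⟩,
      fun P => rfl, fun P => rfl⟩, ?_⟩
    intro P
    rw [extSetN_zero, extSetA_zero]
  | succ n ih =>
    obtain ⟨e, he⟩ := ih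
    have hinjN : ∀ P : C1 n, ∀ D ∈ extSetN P.1, ∀ E ∈ extSetN P.1, maxk D = maxk E → D = E :=
      fun P D hD E hE h =>
        maxk_inj (Finset.mem_filter.1 hD).1 (Finset.mem_filter.1 hE).1 h
    have hinjA : ∀ Q : C2 n, ∀ D ∈ extSetA Q.1, ∀ E ∈ extSetA Q.1, mink D = mink E → D = E :=
      fun Q D hD E hE h =>
        mink_inj (Finset.mem_filter.1 hD).1 (Finset.mem_filter.1 hE).1 h
    choose eN heN using fun P : C1 n => rank_equiv (extSetN P.1) maxk (hinjN P)
    choose eA heA using fun Q : C2 n => rank_equiv (extSetA Q.1) mink (hinjA Q)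
    let φ : ∀ P : C1 n, {B // B ∈ extSetN P.1} ≃ {B // B ∈ extSetA ((e P).1 : SP n)} :=
      fun P => (eN P).trans ((finCongr (he P)).trans (eA (e P)).symm)
    let mid : (Σ P : C1 n, Option {B // B ∈ extSetN P.1})
        ≃ (Σ Q : C2 n, Option {B // B ∈ extSetA Q.1}) :=
      Equiv.sigmaCongr e (fun P => Equiv.optionCongr (φ P))
    let eqN : (Σ P : C1 n, Option {B // B ∈ extSetN P.1}) ≃ C1 (n + 1) :=
      Equiv.ofBijective fN ⟨fN_inj, fN_surj⟩
    let eqA : (Σ Q : C2 n, Option {B // B ∈ extSetA Q.1}) ≃ C2 (n + 1) :=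
      Equiv.ofBijective fA ⟨fA_inj, fA_surj⟩
    refine ⟨eqN.symm.trans (mid.trans eqA), ?_⟩
    intro P'
    obtain ⟨x, rfl⟩ := fN_surj P'
    have hx : eqN.symm (fN x) = x := by
      have : fN x = eqN x := rfl
      rw [this, Equiv.symm_apply_apply]
    have hval : (((eqN.symm.trans (mid.trans eqA)) (fN x)).1 : SP (n + 1)) = (fA (mid x)).1 := by
      simp only [Equiv.trans_apply, hx]
      rfl
    rw [hval]
    obtain ⟨⟨P, hP⟩, i⟩ := x
    match i with
    | none =>
      have hmid : mid ⟨⟨P, hP⟩, none⟩ = ⟨e ⟨P, hP⟩, none⟩ := rfl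
      rw [hmid]
      show (extSetN (addS P)).card = (extSetA (addS ((e ⟨P, hP⟩).1 : SP n))).card
      rw [card_extSetN_addS, card_extSetA_addS, he ⟨P, hP⟩]
    | some ⟨B, hB⟩ =>
      have hmid : mid ⟨⟨P, hP⟩, some ⟨B, hB⟩⟩
          = ⟨e ⟨P, hP⟩, some (φ ⟨P, hP⟩ ⟨B, hB⟩)⟩ := rfl
      rw [hmid]
      set B' := φ ⟨P, hP⟩ ⟨B, hB⟩ with hB'
      show (extSetN (extB P B (Finset.mem_filter.1 hB).1)).card
        = (extSetA (extB ((e ⟨P, hP⟩).1 : SP n) B'.1 (Finset.mem_filter.1 B'.2).1)).card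
      rw [labelN_extB P hB (Finset.mem_filter.1 hB).1,
        labelA_extB ((e ⟨P, hP⟩).1 : SP n) B'.2 (Finset.mem_filter.1 B'.2).1]
      have hrk : rankN P B = rankA ((e ⟨P, hP⟩).1 : SP n) B'.1 := by
        have h1 : ((eN ⟨P, hP⟩ ⟨B, hB⟩ : Fin _) : ℕ) + 1 = rankN P B :=
          heN ⟨P, hP⟩ ⟨B, hB⟩
        have h2 : ((eA (e ⟨P, hP⟩) B' : Fin _) : ℕ) + 1
            = rankA ((e ⟨P, hP⟩).1 : SP n) B'.1 := heA (e ⟨P, hP⟩) B'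
        have h3 : (eA (e ⟨P, hP⟩) B' : ℕ) = (eN ⟨P, hP⟩ ⟨B, hB⟩ : ℕ) := by
          rw [hB']
          show ((eA (e ⟨P, hP⟩)) ((eA (e ⟨P, hP⟩)).symm
            (finCongr (he ⟨P, hP⟩) (eN ⟨P, hP⟩ ⟨B, hB⟩))) : ℕ) = _
          rw [Equiv.apply_symm_apply]
          rfl
        omega
      rw [hrk, he ⟨P, hP⟩]


end Main

/-- The number of 2-distant noncrossing partitions of `[n]` equals the number of
12312-avoiding partitions of `[n]`. -/
theorem ncp_two_eq_avoiding_12312 (n : ℕ) :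
    NCP 2 n = Set.ncard {P : SP n | Avoids12312 P} := by
  obtain ⟨e, -⟩ := main_equiv n
  rw [NCP, ← Nat.card_coe_set_eq, ← Nat.card_coe_set_eq]
  apply Nat.card_congr
  exact (Equiv.subtypeEquivRight (fun P => dcr_eq_zero_iff)).trans
    (e.trans (Equiv.subtypeEquivRight (fun P => (avoids_iff (P := P)).symm)))
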